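/- For A = [[-1,1],[0,0]], B = [[0,0],[-1,1]] and any real k > 0, the coefficient matrix 𝔠(k,ik) = -(A + B·diag(ik,-k))⁻¹(A - B·diag(ik,-k)) equals the k-independent matrix [[i, 1-i],[1+i, -i]]. -/

import Mathlib

open Matrix

/-- For `A = [[-1,1],[0,0]]`, `B = [[0,0],[-1,1]]` and any real `k > 0`, the coefficient
matrix `𝔠(k,ik) = -(A + B·diag(ik,-k))⁻¹(A - B·diag(ik,-k))` equals the `k`-independent
matrix `[[i, 1-i],[1+i, -i]]`. -/
theorem stmt_9 (k : ℝ) (hk : 0 < k)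
    (A B M : Matrix (Fin 2) (Fin 2) ℂ)
    (hA : A = !![-1, 1; 0, 0]) (hB : B = !![0, 0; -1, 1])
    (hM : M = !![Complex.I * (k : ℂ), 0; 0, -(k : ℂ)]) :
    -(A + B * M)⁻¹ * (A - B * M) =
      !![Complex.I, 1 - Complex.I; 1 + Complex.I, -Complex.I] := by
  subst hA hB hM
  have hk0 : (k : ℂ) ≠ 0 := by exact_mod_cast hk.ne'
  have hABM : !![(-1 : ℂ), 1; 0, 0] + !![(0 : ℂ), 0; -1, 1] * !![Complex.I * (k : ℂ), 0; 0, -(k : ℂ)] = !![(-1 : ℂ), 1; -Complex.I * k, -k] := by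
    rw [Matrix.mul_fin_two]; norm_num [← Matrix.ext_iff, Fin.forall_fin_two]
  rw [hABM]
  have hdet : (!![(-1 : ℂ), 1; -Complex.I * k, -k]).det = k + Complex.I * k := by
    simp [Matrix.det_fin_two_of]
  have hne : (k : ℂ) + Complex.I * k ≠ 0 := by
    intro h
    have : (k : ℂ) * (1 + Complex.I) = 0 := by ring_nf; ring_nf at h; linear_combination h
    rcases mul_eq_zero.1 this with h1 | h1
    · exact hk0 h1
    · have := congrArg Complex.re h1; simp at this
  have h1I : (1 + Complex.I) ≠ 0 := by
    intro h; have := congrArg Complex.re h; simp at this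
  rw [Matrix.inv_def, hdet, Matrix.adjugate_fin_two_of, Ring.inverse_eq_inv]
  ext i j
  fin_cases i <;> fin_cases j <;>
    simp [Matrix.mul_apply, Fin.sum_univ_two, Matrix.sub_apply] <;> field_simp <;>
    first
      | linear_combination (k : ℂ) * Complex.I_sq
      | linear_combination (-(k : ℂ)) * Complex.I_sq
      | linear_combination ((k : ℂ)^2 + Complex.I * (k : ℂ)^2) * Complex.I_sq
      | linear_combination (-(k : ℂ)^2 - Complex.I * (k : ℂ)^2) * Complex.I_sq
      | linear_combination Complex.I_sq
      | linear_combination (-1 : ℂ) * Complex.I_sq
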